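/- Let G be a free group on generators x, y, z and let n ≥ 1. Then the n-th power commutator [x,y]^n lies in G^(2) ∩ G^(3),n, and conversely G^(2) ∩ G^(3),n ⊆ G^(3) · (G^(2))^{n_2} where n_2 = n/gcd(n,2); i.e., the image of G^(2) ∩ G^(3),n in G^(2)/G^(3) equals n_2·(G^(2)/G^(3)). -/

import Mathlib

open scoped commutatorElement

private lemma comm_pow_aux {Q : Type*} [Group Q] (a b : Q)
    (h : ∀ x : Q, Commute ⁅b, a⁆ x) : ∀ m : ℕ, b ^ m * a = ⁅b, a⁆ ^ m * (a * b ^ m)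
  | 0 => by simp
  | (m+1) => by
    have hba : b * a = ⁅b, a⁆ * (a * b) := by group
    calc b ^ (m+1) * a = b * (b ^ m * a) := by rw [pow_succ', mul_assoc]
      _ = b * (⁅b, a⁆ ^ m * (a * b ^ m)) := by rw [comm_pow_aux a b h m]
      _ = ⁅b, a⁆ ^ m * (b * a) * b ^ m := by
          rw [← mul_assoc, ← ((h b).pow_left m).eq, mul_assoc, ← mul_assoc b a, ← mul_assoc]
      _ = ⁅b, a⁆ ^ (m+1) * (a * b ^ (m+1)) := by rw [hba, pow_succ, pow_succ']; group

private lemma mul_pow_choose {Q : Type*} [Group Q] (a b : Q)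
    (h : ∀ x : Q, Commute ⁅b, a⁆ x) :
    ∀ m : ℕ, (a * b) ^ m = ⁅b, a⁆ ^ (m.choose 2) * a ^ m * b ^ m
  | 0 => by simp
  | (m+1) => by
    have hC : (m+1).choose 2 = m.choose 2 + m := by
      rw [Nat.choose_succ_succ, Nat.choose_one_right, Nat.add_comm]
    calc (a*b)^(m+1) = (a*b)^m * (a*b) := pow_succ _ _
      _ = ⁅b,a⁆^(m.choose 2) * a^m * b^m * (a*b) := by rw [mul_pow_choose a b h m]
      _ = ⁅b,a⁆^(m.choose 2) * a^m * (b^m * a) * b := by group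
      _ = ⁅b,a⁆^(m.choose 2) * a^m * (⁅b,a⁆^m * (a * b^m)) * b := by
          rw [comm_pow_aux a b h m]
      _ = ⁅b,a⁆^(m.choose 2) * (⁅b,a⁆^m * a^m) * (a * b^m) * b := by
          rw [← mul_assoc (⁅b,a⁆^(m.choose 2) * a^m), mul_assoc (⁅b,a⁆^(m.choose 2)),
            ← ((h (a^m)).pow_left m).eq]
      _ = ⁅b,a⁆^((m+1).choose 2) * a^(m+1) * b^(m+1) := by
          rw [hC, pow_add, pow_succ a, pow_succ b]; group

private lemma choose_two_even (k : ℕ) : (2*k).choose 2 = k * (2*k - 1) := by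
  rw [Nat.choose_two_right, mul_assoc, Nat.mul_div_cancel_left _ (by norm_num : 0 < 2)]

private lemma gcd_two_of_even {n : ℕ} (h : 2 ∣ n) : Nat.gcd n 2 = 2 := by
  rw [Nat.gcd_comm]; exact Nat.gcd_eq_left h

private lemma gcd_two_of_odd {n : ℕ} (h : Odd n) : Nat.gcd n 2 = 1 := by
  rcases (Nat.dvd_prime Nat.prime_two).mp (Nat.gcd_dvd_right n 2) with h1 | h2
  · exact h1
  · exact absurd (h2 ▸ Nat.gcd_dvd_left n 2) (by rcases ho : h with ⟨k, hk⟩; omega)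

/-- `n₂ ∣ n.choose 2` -/
private lemma n2_dvd_choose (n : ℕ) : ∃ m, n.choose 2 = (n / Nat.gcd n 2) * m := by
  rcases Nat.even_or_odd n with he | ho
  · obtain ⟨k, hk⟩ := he
    have h2 : 2 ∣ n := ⟨k, by omega⟩
    refine ⟨n - 1, ?_⟩
    rw [gcd_two_of_even h2, show n = 2*k by omega, choose_two_even,
      Nat.mul_div_cancel_left _ (by norm_num : 0 < 2)]
  · refine ⟨(n-1)/2, ?_⟩
    rw [gcd_two_of_odd ho, Nat.div_one, Nat.choose_two_right,
      Nat.mul_div_assoc n (by rcases ho with ⟨k, hk⟩; omega : 2 ∣ n - 1)]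

/-- Bezout: `n₂ = s * C(n,2) + t * n` over ℤ. -/
private lemma n2_bezout (n : ℕ) (hn : 1 ≤ n) :
    ∃ s t : ℤ, ((n / Nat.gcd n 2 : ℕ) : ℤ) = s * (n.choose 2 : ℤ) + t * (n : ℤ) := by
  rcases Nat.even_or_odd n with he | ho
  · obtain ⟨k, hk⟩ := he
    have h2 : 2 ∣ n := ⟨k, by omega⟩
    refine ⟨-1, k, ?_⟩
    have h1 : n / Nat.gcd n 2 = k := by rw [gcd_two_of_even h2]; omega
    have h3 : n.choose 2 = k * (2*k-1) := by rw [show n = 2*k by omega, choose_two_even]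
    have hk1 : 1 ≤ k := by omega
    rw [h1, h3, show n = 2*k by omega]
    push_cast [Nat.cast_sub (by omega : 1 ≤ 2*k)]
    ring
  · refine ⟨0, 1, ?_⟩
    rw [gcd_two_of_odd ho, Nat.div_one]
    ring

private def psiHom : FreeGroup (Fin 3) →* Multiplicative (Fin 3 → ℤ) :=
  FreeGroup.lift fun i => Multiplicative.ofAdd (Pi.single i 1)

private lemma ker_psi_le : psiHom.ker ≤ commutator (FreeGroup (Fin 3)) := by
  classical
  set G := FreeGroup (Fin 3)
  let b : Fin 3 → Additive (Abelianization G) := fun i =>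
    Additive.ofMul (Abelianization.of (FreeGroup.of i))
  let θ' : (Fin 3 → ℤ) →+ Additive (Abelianization G) :=
    { toFun := fun v => ∑ i, v i • b i
      map_zero' := by simp
      map_add' := fun v w => by
        simp [add_smul, Finset.sum_add_distrib] }
  let θ : Multiplicative (Fin 3 → ℤ) →* Abelianization G := AddMonoidHom.toMultiplicativeLeft θ'
  have hcomp : θ.comp psiHom = Abelianization.of := by
    apply FreeGroup.ext_hom
    intro i
    show θ (psiHom (FreeGroup.of i)) = _
    rw [show psiHom (FreeGroup.of i) = Multiplicative.ofAdd (Pi.single i 1) from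
      FreeGroup.lift_apply_of]
    simp only [θ, AddMonoidHom.coe_toMultiplicativeLeft, Function.comp_apply, toAdd_ofAdd]
    simp only [θ', AddMonoidHom.coe_mk, ZeroHom.coe_mk]
    simp [b, Pi.single_apply, ite_smul]
  intro g hg
  have h1 : Abelianization.of g = 1 := by
    rw [← hcomp]
    simp only [MonoidHom.comp_apply]
    rw [show psiHom g = 1 from hg, map_one]
  exact (QuotientGroup.eq_one_iff g).mp h1

/-- The commutator `[a,b] = a⁻¹ b⁻¹ a b`. -/
def commP {G : Type*} [Group G] (a b : G) : G := a⁻¹ * b⁻¹ * a * b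

/-- The lower central series with the paper's indexing: `plcs G 1 = G`,
`plcs G (k+1) = [plcs G k, G]`. -/
def plcs (G : Type*) [Group G] (k : ℕ) : Subgroup G := (⊤ : Subgroup G).lowerCentralSeries (k - 1)

/-- The subgroup generated by `n`-th powers. -/
def powSubgroup (G : Type*) [Group G] (n : ℕ) : Subgroup G :=
  Subgroup.closure {x : G | ∃ g : G, g ^ n = x}

theorem plcs2_inter_plcs3n (n : ℕ) (hn : 1 ≤ n) :
    let G := FreeGroup (Fin 3)
    let x : G := FreeGroup.of 0
    let y : G := FreeGroup.of 1
    (commP x y) ^ n ∈ plcs G 2 ⊓ (plcs G 3 ⊔ powSubgroup G n) ∧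
      plcs G 2 ⊓ (plcs G 3 ⊔ powSubgroup G n) =
        plcs G 3 ⊔
          Subgroup.closure {w : G | ∃ a ∈ plcs G 2, a ^ (n / Nat.gcd n 2) = w} := by
  intro G x y
  classical
  have h2 : plcs G 2 = commutator G := rfl
  have h3 : plcs G 3 = (⊤ : Subgroup G).lowerCentralSeries 2 := rfl
  set n₂ := n / Nat.gcd n 2 with hn2def
  have hng : n = n₂ * Nat.gcd n 2 := (Nat.div_mul_cancel (Nat.gcd_dvd_left n 2)).symm
  set N : Subgroup G := (⊤ : Subgroup G).lowerCentralSeries 2 with hNdef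
  let π : G →* G ⧸ N := QuotientGroup.mk' N
  have hπs : Function.Surjective π := QuotientGroup.mk'_surjective N
  have hkerπ : π.ker = N := QuotientGroup.ker_mk' N
  have hNcomm : N ≤ commutator G := by
    rw [← lowerCentralSeries_one]
    exact lowerCentralSeries_antitone _ (by norm_num)
  -- centrality of images of the commutator subgroup
  have hcent : ∀ w ∈ commutator G, ∀ q : G ⧸ N, Commute (π w) q := by
    intro w hw q
    obtain ⟨g, rfl⟩ := hπs q
    have hwg : ⁅w, g⁆ ∈ N := by
      show ⁅w, g⁆ ∈ (⊤ : Subgroup G).lowerCentralSeries 2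
      rw [show (2 : ℕ) = 1 + 1 from rfl, lowerCentralSeries_succ]
      exact Subgroup.commutator_mem_commutator
        (by rwa [lowerCentralSeries_one]) (Subgroup.mem_top g)
    rw [← commutatorElement_eq_one_iff_commute, ← map_commutatorElement]
    rw [← MonoidHom.mem_ker, hkerπ]
    exact hwg
  have hcentc : ∀ g h : G ⧸ N, ∀ q : G ⧸ N, Commute ⁅g, h⁆ q := by
    intro g h q
    obtain ⟨g', rfl⟩ := hπs g
    obtain ⟨h', rfl⟩ := hπs h
    rw [← map_commutatorElement]
    exact hcent _ (Subgroup.commutator_mem_commutator (Subgroup.mem_top _)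
      (Subgroup.mem_top _)) q
  -- abbreviations
  set J : Subgroup G := plcs G 3 ⊔ powSubgroup G n with hJdef
  set Scl : Subgroup G := Subgroup.closure {w : G | ∃ a ∈ plcs G 2, a ^ n₂ = w} with hScl
  set R : Subgroup G := plcs G 3 ⊔ Scl with hRdef
  have hNJ : N ≤ J := le_trans (le_of_eq h3.symm) le_sup_left
  have hNR : N ≤ R := le_trans (le_of_eq h3.symm) le_sup_left
  have hRle : R ≤ commutator G := by
    rw [hRdef]
    refine sup_le (h3 ▸ hNcomm) (Subgroup.closure_le _ |>.mpr ?_)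
    rintro w ⟨a, ha, rfl⟩
    exact pow_mem (h2 ▸ ha) n₂
  -- membership transfer along π
  have hmem_map : ∀ (S : Subgroup G), N ≤ S → ∀ w : G, π w ∈ S.map π → w ∈ S := by
    intro S hNS w hw
    obtain ⟨r, hr, he⟩ := hw
    have h1 : r⁻¹ * w ∈ N := by
      rw [← hkerπ, MonoidHom.mem_ker, map_mul, map_inv, he, inv_mul_cancel]
    have : w = r * (r⁻¹ * w) := (mul_inv_cancel_left r w).symm
    rw [this]
    exact mul_mem hr (hNS h1)
  -- powers land in J.map π
  have hpowJ' : ∀ q : G ⧸ N, q ^ n ∈ J.map π := by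
    intro q
    obtain ⟨u, rfl⟩ := hπs q
    rw [← map_pow]
    exact Subgroup.mem_map_of_mem π (Subgroup.mem_sup_right (Subgroup.subset_closure ⟨u, rfl⟩))
  have hchooseJ' : ∀ g h : G ⧸ N, ⁅g, h⁆ ^ (n.choose 2) ∈ J.map π := by
    intro g h
    have hid := mul_pow_choose h g (hcentc g h) n
    have hre : ⁅g, h⁆ ^ (n.choose 2) = (h * g) ^ n * (g ^ n)⁻¹ * (h ^ n)⁻¹ := by
      rw [hid]; group
    rw [hre]
    exact mul_mem (mul_mem (hpowJ' _) (inv_mem (hpowJ' _))) (inv_mem (hpowJ' _))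
  obtain ⟨m, hm⟩ := n2_dvd_choose n
  have hchooseR' : ∀ g h : G, (π ⁅g, h⁆) ^ (n.choose 2) ∈ R.map π := by
    intro g h
    have h1 : ⁅g, h⁆ ^ (n.choose 2) ∈ Scl := by
      rw [hm, mul_comm n₂ m, pow_mul]
      refine Subgroup.subset_closure ⟨⁅g, h⁆ ^ m, ?_, rfl⟩
      exact pow_mem (h2 ▸ Subgroup.commutator_mem_commutator (Subgroup.mem_top _)
        (Subgroup.mem_top _)) m
    rw [← map_pow]
    exact Subgroup.mem_map_of_mem π (Subgroup.mem_sup_right h1)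
  constructor
  · refine Subgroup.mem_inf.mpr ⟨?_, ?_⟩
    · have hxy : commP x y = ⁅x⁻¹, y⁻¹⁆ := by
        simp [commP, commutatorElement_def]
        exact congrArg₂ (· * ·) (congrArg (x⁻¹ * y⁻¹ * ·) (inv_inv x).symm) (inv_inv y).symm
      rw [h2, hxy]
      exact pow_mem (Subgroup.commutator_mem_commutator (Subgroup.mem_top _)
        (Subgroup.mem_top _)) n
    · exact Subgroup.mem_sup_right (Subgroup.subset_closure ⟨commP x y, rfl⟩)
  -- the equality
  refine le_antisymm ?_ (sup_le (le_inf (by rw [h3, h2]; exact hNcomm) le_sup_left) ?_)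
  · -- ⊆ direction
    rintro w ⟨hw2, hwJ⟩
    -- the auxiliary subgroup H of the quotient
    have hP'cent : ∀ p ∈ R.map π, ∀ q : G ⧸ N, Commute p q := by
      rintro p ⟨r, hr, rfl⟩ q
      exact hcent r (hRle hr) q
    let H : Subgroup (G ⧸ N) :=
      { carrier := {q | ∃ g : G ⧸ N, ∃ p ∈ R.map π, q = g ^ n * p}
        one_mem' := ⟨1, 1, one_mem _, by simp⟩
        mul_mem' := by
          rintro q r ⟨g, p, hp, rfl⟩ ⟨g', p', hp', rfl⟩
          refine ⟨g * g', (⁅g', g⁆ ^ (n.choose 2))⁻¹ * p * p',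
            mul_mem (mul_mem (inv_mem ?_) hp) hp', ?_⟩
          · obtain ⟨g₀, rfl⟩ := hπs g
            obtain ⟨g₀', rfl⟩ := hπs g'
            rw [← map_commutatorElement]
            exact hchooseR' g₀' g₀
          · have hid := mul_pow_choose g g' (hcentc g' g) n
            rw [hid]
            have hpc := (hP'cent p hp (g' ^ n)).eq
            have hcc := ((hcentc g' g (g ^ n * g' ^ n)).pow_left (n.choose 2)).eq
            calc g ^ n * p * (g' ^ n * p')
                = g ^ n * (p * g' ^ n) * p' := by group
              _ = g ^ n * (g' ^ n * p) * p' := by rw [hpc]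
              _ = ⁅g', g⁆ ^ n.choose 2 * (g ^ n * g' ^ n) *
                    ((⁅g', g⁆ ^ n.choose 2)⁻¹ * p * p') := by
                  rw [hcc]; group
              _ = ⁅g', g⁆ ^ n.choose 2 * g ^ n * g' ^ n *
                    ((⁅g', g⁆ ^ n.choose 2)⁻¹ * p * p') := by group
        inv_mem' := by
          rintro q ⟨g, p, hp, rfl⟩
          refine ⟨g⁻¹, p⁻¹, inv_mem hp, ?_⟩
          rw [mul_inv_rev, inv_pow]
          exact (((hP'cent p hp (g ^ n)).inv_left).inv_right).eq }
    have hJH : J.map π ≤ H := by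
      rw [hJdef, Subgroup.map_sup]
      refine sup_le ?_ ?_
      · have : Subgroup.map π (plcs G 3) = ⊥ := by
          rw [Subgroup.map_eq_bot_iff, hkerπ]
          exact le_of_eq h3
        rw [this]; exact bot_le
      · rw [powSubgroup, MonoidHom.map_closure]
        refine Subgroup.closure_le _ |>.mpr ?_
        rintro _ ⟨_, ⟨g, rfl⟩, rfl⟩
        exact ⟨π g, 1, one_mem _, by rw [map_pow, mul_one]⟩
    obtain ⟨g, p, hp, hqe⟩ := hJH (Subgroup.mem_map_of_mem π hwJ)
    obtain ⟨g₀, rfl⟩ := hπs g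
    obtain ⟨r, hrR, hrp⟩ := hp
    have hν : (g₀ ^ n * r)⁻¹ * w ∈ N := by
      rw [← hkerπ, MonoidHom.mem_ker, map_mul, map_inv, map_mul, map_pow, hrp, ← hqe,
        inv_mul_cancel]
    have hdecomp : w = g₀ ^ n * r * ((g₀ ^ n * r)⁻¹ * w) := by group
    have hψw : psiHom w = 1 :=
      Abelianization.commutator_subset_ker psiHom (h2 ▸ hw2)
    have hψr : psiHom r = 1 :=
      Abelianization.commutator_subset_ker psiHom (hRle hrR)
    have hψν : psiHom ((g₀ ^ n * r)⁻¹ * w) = 1 :=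
      Abelianization.commutator_subset_ker psiHom (hNcomm hν)
    have hψg : psiHom g₀ ^ n = 1 := by
      have := congrArg psiHom hdecomp
      rw [map_mul, map_mul, map_pow, hψr, hψν, hψw, mul_one, mul_one] at this
      exact this.symm
    have hψg1 : psiHom g₀ = 1 := by
      rw [← toAdd_eq_zero]
      have h0 : n • (psiHom g₀).toAdd = 0 := by
        rw [← toAdd_pow, hψg]; rfl
      funext i
      have := congrFun h0 i
      simp only [Pi.smul_apply, smul_eq_mul, Pi.zero_apply, nsmul_eq_mul] at this ⊢
      rcases mul_eq_zero.mp this with h | h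
      · exfalso; omega
      · exact h
    have hg₀ : g₀ ∈ commutator G := ker_psi_le (MonoidHom.mem_ker.mpr hψg1)
    have hg₀n : g₀ ^ n ∈ Scl := by
      rw [hng, mul_comm n₂ (Nat.gcd n 2), pow_mul]
      exact Subgroup.subset_closure ⟨g₀ ^ Nat.gcd n 2, pow_mem (h2.symm ▸ hg₀) _, rfl⟩
    rw [hdecomp]
    exact mul_mem (mul_mem (Subgroup.mem_sup_right hg₀n) hrR) (hNR hν)
  · -- ⊇ direction : Scl ≤ LHS
    refine Subgroup.closure_le _ |>.mpr ?_
    rintro w ⟨a, ha, rfl⟩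
    refine Subgroup.mem_inf.mpr ⟨pow_mem ha n₂, ?_⟩
    refine hmem_map J hNJ _ ?_
    rw [map_pow]
    have hw : a ∈ commutator G := h2 ▸ ha
    rw [commutator_eq_closure] at hw
    clear ha
    induction hw using Subgroup.closure_induction with
    | mem c hc =>
      obtain ⟨g, h, rfl⟩ := hc
      obtain ⟨s, t, hst⟩ := n2_bezout n hn
      have h1 : (π ⁅g, h⁆) ^ ((n₂ : ℤ)) ∈ J.map π := by
        rw [hn2def, hst, zpow_add, mul_comm s _, zpow_mul, mul_comm t _, zpow_mul]
        refine mul_mem (Subgroup.zpow_mem _ ?_ s) (Subgroup.zpow_mem _ ?_ t)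
        · rw [zpow_natCast, map_commutatorElement]
          exact hchooseJ' (π g) (π h)
        · rw [zpow_natCast]
          exact hpowJ' _
      rw [← zpow_natCast]
      exact h1
    | one => rw [map_one, one_pow]; exact one_mem _
    | mul c d hc hd hpc hpd =>
      rw [map_mul, (hcent c (by rwa [commutator_eq_closure]) (π d)).mul_pow]
      exact mul_mem hpc hpd
    | inv c hc hpc =>
      rw [map_inv, inv_pow]
      exact inv_mem hpc
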